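/- Suppose K is a Peano continuum (nonempty compact connected locally connected metric space) containing a homeomorphic copy of the circle S¹. Then C(K) is not W*-C*-projective: the composition of the restriction map j : C(K) → C(S¹) with the *-homomorphism ρ : C(S¹) → B(H)/K(H) sending the identity function z to the image of the unilateral shift does not lift to a *-homomorphism C(K) → B(H). -/

import Mathlib

open Filter Topology Metric

section AuxiliaryLemmas
variable {H : Type*} [NormedAddCommGroup H] [InnerProductSpace ℂ H] [CompleteSpace H]

local notation "⟪" x ", " y "⟫" => @inner ℂ _ _ x y

/-- A compact operator sends a bounded sequence to one with a convergent subsequence. -/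
lemma aux_subseq {D : H →L[ℂ] H} (hD : IsCompactOperator ⇑D) (x : ℕ → H)
    (hx : ∀ n, ‖x n‖ ≤ 1) :
    ∃ φ : ℕ → ℕ, StrictMono φ ∧ ∃ y, Tendsto (fun n => D (x (φ n))) atTop (𝓝 y) := by
  have hc : IsCompact (closure (⇑D '' Metric.closedBall 0 1)) :=
    IsCompactOperator.isCompact_closure_image_closedBall (𝕜₁ := ℂ)
      (f := (D : H →ₗ[ℂ] H)) hD 1
  have hmem : ∀ n, D (x n) ∈ closure (⇑D '' Metric.closedBall 0 1) := fun n =>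
    subset_closure ⟨x n, by simpa [Metric.mem_closedBall, dist_eq_norm] using hx n, rfl⟩
  obtain ⟨y, -, φ, hφ, hy⟩ := hc.tendsto_subseq hmem
  exact ⟨φ, hφ, y, hy⟩

/-- Bounded-below on a closed subspace, modulo a compact perturbation of the identity. -/
lemma aux_bounded_below {S : H →L[ℂ] H} (hcomp : IsCompactOperator ⇑(S - 1))
    {V : Submodule ℂ H} (hV : IsClosed (V : Set H))
    (hinj : ∀ x ∈ V, S x = 0 → x = 0) :
    ∃ c : ℝ, 0 < c ∧ ∀ x ∈ V, c * ‖x‖ ≤ ‖S x‖ := by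
  by_contra hcon
  push_neg at hcon
  have key : ∀ n : ℕ, ∃ u : H, u ∈ V ∧ ‖u‖ = 1 ∧ ‖S u‖ < 1 / (n + 1) := by
    intro n
    obtain ⟨x, hxV, hx⟩ := hcon (1 / (n + 1)) (by positivity)
    have hx0 : x ≠ 0 := by
      rintro rfl
      simp at hx
    have hn : ‖((‖x‖ : ℂ))⁻¹‖ = ‖x‖⁻¹ := by
      rw [norm_inv, Complex.norm_real, Real.norm_eq_abs, abs_of_nonneg (norm_nonneg x)]
    refine ⟨((‖x‖ : ℂ))⁻¹ • x, V.smul_mem _ hxV, ?_, ?_⟩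
    · rw [norm_smul, hn, inv_mul_cancel₀ (norm_ne_zero_iff.mpr hx0)]
    · rw [map_smul, norm_smul, hn, inv_mul_lt_iff₀ (norm_pos_iff.mpr hx0)]
      calc ‖S x‖ < 1 / (n + 1) * ‖x‖ := hx
        _ = ‖x‖ * (1 / (n+1)) := by ring
  choose u huV hu1 huS using key
  obtain ⟨φ, hφ, y, hy⟩ := aux_subseq hcomp u (fun n => (hu1 n).le)
  -- u (φ n) = S (u (φ n)) - (S - 1) (u (φ n))
  have hSu : Tendsto (fun n => S (u (φ n))) atTop (𝓝 0) := by
    rw [tendsto_iff_norm_sub_tendsto_zero]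
    refine squeeze_zero (fun n => by positivity) (fun n => ?_)
      (tendsto_one_div_add_atTop_nhds_zero_nat.comp (hφ.tendsto_atTop))
    simpa using (huS (φ n)).le
  have hulim : Tendsto (fun n => u (φ n)) atTop (𝓝 (-y)) := by
    have heq : (fun n => u (φ n)) = fun n => S (u (φ n)) - (S - 1) (u (φ n)) := by
      funext n
      simp [ContinuousLinearMap.sub_apply]
    rw [heq]
    simpa using hSu.sub hy
  have hyV : -y ∈ V := hV.mem_of_tendsto hulim (Eventually.of_forall fun n => huV (φ n))
  have hy1 : ‖-y‖ = 1 := by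
    have h1 : Tendsto (fun n => ‖u (φ n)‖) atTop (𝓝 ‖-y‖) :=
      (continuous_norm.tendsto (-y)).comp hulim
    have h2 : Tendsto (fun _ : ℕ => (1:ℝ)) atTop (𝓝 ‖-y‖) := by
      simpa [hu1] using h1
    exact tendsto_nhds_unique h2 tendsto_const_nhds
  have hy0 : S (-y) = 0 :=
    tendsto_nhds_unique ((S.continuous.tendsto (-y)).comp hulim) hSu
  have := hinj _ hyV hy0
  rw [this, norm_zero] at hy1
  norm_num at hy1

/-- The Fredholm alternative in Hilbert space: an injective compact perturbation of the
identity is surjective. -/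
lemma fredholm_alternative {D : H →L[ℂ] H} (hD : IsCompactOperator ⇑D)
    (hinj : Function.Injective ⇑(1 - D)) : Function.Surjective ⇑(1 - D) := by
  set S : H →L[ℂ] H := 1 - D with hSdef
  have hcomp : IsCompactOperator ⇑(S - 1) := by
    have h1 : S - 1 = -D := by rw [hSdef]; abel
    rw [h1]
    have : ⇑(-D) = -⇑D := by ext z; simp
    rw [this]
    exact hD.neg
  obtain ⟨c, hc, hbound⟩ := aux_bounded_below hcomp (V := (⊤ : Submodule ℂ H))
    (by simp) (fun x _ hx => hinj (by simpa using hx))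
  have cb : ∀ x, c * ‖x‖ ≤ ‖S x‖ := fun x => hbound x trivial
  -- powers are bounded below
  have hpow : ∀ (n : ℕ) (x : H), c ^ n * ‖x‖ ≤ ‖(S ^ n) x‖ := by
    intro n
    induction n with
    | zero => intro x; simp
    | succ n ih =>
      intro x
      have h1 : (S ^ (n + 1)) x = (S ^ n) (S x) := by
        rw [pow_succ]; rfl
      rw [h1, pow_succ, mul_comm (c ^ n) c, mul_assoc]
      calc c * (c ^ n * ‖x‖) = c ^ n * (c * ‖x‖) := by ring
        _ ≤ c ^ n * ‖S x‖ :=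
            mul_le_mul_of_nonneg_left (cb x) (by positivity)
        _ ≤ ‖(S ^ n) (S x)‖ := ih (S x)
  have hanti : ∀ n : ℕ, AntilipschitzWith (⟨c, hc.le⟩⁻¹ ^ n) ⇑(S ^ n) := by
    intro n
    apply ContinuousLinearMap.antilipschitz_of_bound
    intro x
    have := hpow n x
    have hcn : (0:ℝ) < c ^ n := by positivity
    change ‖x‖ ≤ c⁻¹ ^ n * ‖(S ^ n) x‖
    rw [inv_pow]
    rw [le_inv_mul_iff₀ hcn]
    linarith [hpow n x]
  have hclosed : ∀ n : ℕ, IsClosed (Set.range ⇑(S ^ n)) := fun n =>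
    (hanti n).isClosed_range (S ^ n).uniformContinuous
  have hinjn : ∀ n : ℕ, Function.Injective ⇑(S ^ n) := fun n => (hanti n).injective
  -- suppose not surjective
  by_contra hsur
  obtain ⟨y, hy⟩ : ∃ y : H, ∀ w, S w ≠ y := by
    by_contra hcon
    push_neg at hcon
    exact hsur fun y => hcon y
  set R : ℕ → Submodule ℂ H := fun n => LinearMap.range ((S ^ n : H →L[ℂ] H) : H →ₗ[ℂ] H) with hRdef
  have hRclosed : ∀ n, IsClosed ((R n : Set H)) := by
    intro n
    rw [hRdef]
    simpa only [LinearMap.coe_range, ContinuousLinearMap.coe_coe] using hclosed n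
  have hRmono : ∀ {n m : ℕ}, n ≤ m → R m ≤ R n := by
    intro n m hnm z hz
    obtain ⟨w, hw⟩ := hz
    refine ⟨(S ^ (m - n)) w, ?_⟩
    simp only [ContinuousLinearMap.coe_coe] at hw ⊢
    rw [← ContinuousLinearMap.mul_apply, ← pow_add]
    rw [show n + (m - n) = m from Nat.add_sub_cancel' hnm]
    exact hw
  -- pick the orthogonal unit vectors
  have hpick : ∀ n : ℕ, ∃ x : H, x ∈ R n ∧ ‖x‖ = 1 ∧ x ∈ (R (n + 1))ᗮ := by
    intro n
    have hcomplete : CompleteSpace ↥(R (n + 1)) := (hRclosed (n + 1)).completeSpace_coe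
    set u : H := (S ^ n) y with hu
    have huRn : u ∈ R n := ⟨y, rfl⟩
    have huNot : u ∉ R (n + 1) := by
      rintro ⟨w, hw⟩
      simp only [ContinuousLinearMap.coe_coe] at hw
      apply hy w
      apply hinjn n
      rw [← ContinuousLinearMap.mul_apply, ← pow_succ, hw, hu]
    set v : H := u - ((R (n + 1)).orthogonalProjectionOnto u : H) with hv
    have hv0 : v ≠ 0 := by
      intro h0
      apply huNot
      have : u = (((R (n + 1)).orthogonalProjectionOnto u : H)) := by
        rwa [hv, sub_eq_zero] at h0
      rw [this]
      exact Submodule.coe_mem _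
    have hvorth : v ∈ (R (n + 1))ᗮ := Submodule.sub_starProjection_mem_orthogonal u
    have hvRn : v ∈ R n := by
      apply Submodule.sub_mem _ huRn
      exact hRmono (Nat.le_succ n) (Submodule.coe_mem _)
    have hnv : ‖((‖v‖ : ℂ))⁻¹‖ = ‖v‖⁻¹ := by
      rw [norm_inv, Complex.norm_real, Real.norm_eq_abs, abs_of_nonneg (norm_nonneg v)]
    refine ⟨((‖v‖ : ℂ))⁻¹ • v, Submodule.smul_mem _ _ hvRn, ?_,
      Submodule.smul_mem _ _ hvorth⟩
    rw [norm_smul, hnv, inv_mul_cancel₀ (norm_ne_zero_iff.mpr hv0)]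
  choose x hxR hx1 hxorth using hpick
  -- separation of the images
  have hsep : ∀ {n m : ℕ}, n < m → 1 ≤ ‖D (x n) - D (x m)‖ := by
    intro n m hnm
    have hDz : ∀ z : H, D z = z - S z := by
      intro z; rw [hSdef]; simp
    set w : H := S (x n) + x m - S (x m) with hw
    have hSxn : S (x n) ∈ R (n + 1) := by
      obtain ⟨a, ha⟩ := hxR n
      refine ⟨a, ?_⟩
      simp only [ContinuousLinearMap.coe_coe] at ha ⊢
      rw [pow_succ']
      rw [ContinuousLinearMap.mul_apply, ha]
    have hxm : x m ∈ R (n + 1) := hRmono hnm (hxR m)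
    have hSxm : S (x m) ∈ R (n + 1) := by
      obtain ⟨a, ha⟩ := hxR m
      have : S (x m) ∈ R (m + 1) := by
        refine ⟨a, ?_⟩
        simp only [ContinuousLinearMap.coe_coe] at ha ⊢
        rw [pow_succ']
        rw [ContinuousLinearMap.mul_apply, ha]
      exact hRmono (Nat.succ_le_succ hnm.le) this
    have hwR : w ∈ R (n + 1) := Submodule.sub_mem _ (Submodule.add_mem _ hSxn hxm) hSxm
    have hDiff : D (x n) - D (x m) = x n - w := by
      rw [hDz, hDz, hw]; abel
    have hinner : ⟪w, x n⟫ = 0 := (Submodule.mem_orthogonal _ _).mp (hxorth n) w hwR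
    have h1 : ⟪x n - w, x n⟫ = 1 := by
      rw [inner_sub_left, hinner, sub_zero, inner_self_eq_norm_sq_to_K, hx1]
      norm_num
    calc (1:ℝ) = ‖⟪x n - w, x n⟫‖ := by rw [h1]; simp
      _ ≤ ‖x n - w‖ * ‖x n‖ := norm_inner_le_norm _ _
      _ = ‖D (x n) - D (x m)‖ := by rw [hx1, mul_one, hDiff]
  -- compactness contradiction
  obtain ⟨φ, hφ, z, hz⟩ := aux_subseq hD x (fun n => (hx1 n).le)
  have hcauchy := hz.cauchySeq
  rw [Metric.cauchySeq_iff] at hcauchy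
  obtain ⟨N, hN⟩ := hcauchy 1 one_pos
  have h1 := hN N le_rfl (N + 1) (Nat.le_succ N)
  rw [dist_eq_norm] at h1
  exact absurd h1 (not_lt.mpr (hsep (hφ (Nat.lt_succ_self N))))

/-- For a normal operator, `‖N x‖ = ‖N* x‖`. -/
lemma aux_norm_star {N : H →L[ℂ] H} (hnormal : star N * N = N * star N) (x : H) :
    ‖N x‖ = ‖(star N) x‖ := by
  have h1 : ⟪(star N * N) x, x⟫ = ⟪N x, N x⟫ := by
    rw [ContinuousLinearMap.mul_apply, ContinuousLinearMap.star_eq_adjoint]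
    exact ContinuousLinearMap.adjoint_inner_left N (x := x) (y := N x)
  have h2 : ⟪(N * star N) x, x⟫ = ⟪(star N) x, (star N) x⟫ := by
    rw [ContinuousLinearMap.mul_apply, ContinuousLinearMap.star_eq_adjoint]
    nth_rewrite 1 [show N = ContinuousLinearMap.adjoint (ContinuousLinearMap.adjoint N) by
      rw [ContinuousLinearMap.adjoint_adjoint]]
    exact ContinuousLinearMap.adjoint_inner_left _ _ _
  have h3 : ⟪N x, N x⟫ = ⟪(star N) x, (star N) x⟫ := by
    rw [← h1, ← h2, hnormal]
  have h4 : (‖N x‖ : ℝ)^2 = (‖(star N) x‖ : ℝ)^2 := by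
    rw [← @inner_self_eq_norm_sq ℂ, ← @inner_self_eq_norm_sq ℂ, h3]
  have e1 := norm_nonneg (N x)
  have e2 := norm_nonneg ((star N) x)
  nlinarith [sq_nonneg (‖N x‖ - ‖(star N) x‖), sq_nonneg (‖N x‖ + ‖(star N) x‖)]

/-- Orthogonal projections onto finite-dimensional subspaces are compact. -/
lemma aux_proj_compact (U : Submodule ℂ H) [CompleteSpace ↥U] [FiniteDimensional ℂ ↥U] :
    IsCompactOperator ⇑(U.subtypeL ∘L U.orthogonalProjectionOnto) := by
  haveI : ProperSpace ↥U := FiniteDimensional.proper ℂ ↥U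
  refine ⟨Subtype.val '' Metric.closedBall (0 : ↥U) 1, 
    (isCompact_closedBall _ _).image continuous_subtype_val, ?_⟩
  apply Filter.mem_of_superset (Metric.ball_mem_nhds (0:H) one_pos)
  intro x hx
  refine ⟨U.orthogonalProjectionOnto x, ?_, rfl⟩
  rw [Metric.mem_closedBall, dist_zero_right]
  have hle : ‖U.orthogonalProjectionOnto x‖ ≤ ‖x‖ := by
    calc ‖U.orthogonalProjectionOnto x‖ ≤ ‖U.orthogonalProjectionOnto‖ * ‖x‖ :=
          U.orthogonalProjectionOnto.le_opNorm x
      _ ≤ 1 * ‖x‖ := by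
          have := Submodule.orthogonalProjectionOnto_norm_le U
          nlinarith [norm_nonneg x]
      _ = ‖x‖ := one_mul _
  have hx1 : ‖x‖ < 1 := by simpa [Metric.mem_ball, dist_zero_right] using hx
  linarith

/-- Kernel of `N` is finite-dimensional when `N* N - 1` is compact. -/
lemma aux_ker_findim {N : H →L[ℂ] H} (hK1 : IsCompactOperator ⇑(star N * N - 1)) :
    FiniteDimensional ℂ ↥(LinearMap.ker (N : H →ₗ[ℂ] H)) := by
  have hKc : IsCompact (closure (⇑(star N * N - 1) '' Metric.closedBall 0 1)) :=
    IsCompactOperator.isCompact_closure_image_closedBall (𝕜₁ := ℂ)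
      (f := ((star N * N - 1 : H →L[ℂ] H) : H →ₗ[ℂ] H)) hK1 1
  set Kc := closure (⇑(star N * N - 1) '' Metric.closedBall 0 1) with hKcdef
  set B : Set H := (LinearMap.ker (N : H →ₗ[ℂ] H) : Set H) ∩ Metric.closedBall 0 1 with hBdef
  have hBsub : B ⊆ -Kc := by
    rintro x ⟨hx1, hx2⟩
    rw [Set.mem_neg]
    have hNx : N x = 0 := hx1
    have : -x = (star N * N - 1) x := by
      simp [ContinuousLinearMap.sub_apply, ContinuousLinearMap.mul_apply, hNx]
    rw [this]
    exact subset_closure ⟨x, hx2, rfl⟩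
  have hBclosed : IsClosed B :=
    (ContinuousLinearMap.isClosed_ker N).inter Metric.isClosed_closedBall
  have hBcompact : IsCompact B := (hKc.neg).of_isClosed_subset hBclosed hBsub
  apply FiniteDimensional.of_isCompact_closedBall₀ ℂ one_pos
    (h := show IsCompact (Metric.closedBall (0 : ↥(LinearMap.ker (N : H →ₗ[ℂ] H))) 1) from ?_)
  rw [Topology.IsEmbedding.subtypeVal.isCompact_iff]
  have himg : Subtype.val '' Metric.closedBall (0 : ↥(LinearMap.ker (N : H →ₗ[ℂ] H))) 1 = B := by
    ext y
    constructor
    · rintro ⟨⟨z, hz⟩, hz1, rfl⟩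
      refine ⟨hz, ?_⟩
      simpa [Metric.mem_closedBall, dist_zero_right] using hz1
    · rintro ⟨hy1, hy2⟩
      refine ⟨⟨y, hy1⟩, ?_, rfl⟩
      simpa [Metric.mem_closedBall, dist_zero_right] using hy2
  rwa [himg]

/-- Core of Proposition 4.7: if a normal operator `N` is a compact perturbation of an
isometry `T` and `N* N - 1` is compact, then `T` is a unitary. -/
lemma core_lemma {N T : H →L[ℂ] H} (hnormal : star N * N = N * star N)
    (hK1 : IsCompactOperator ⇑(star N * N - 1))
    (hC : IsCompactOperator ⇑(N - T))
    (hT : star T * T = 1) : T * star T = 1 := by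
  classical
  set U : Submodule ℂ H := LinearMap.ker (N : H →ₗ[ℂ] H) with hUdef
  have hUclosed : IsClosed (U : Set H) := ContinuousLinearMap.isClosed_ker N
  haveI : CompleteSpace ↥U := hUclosed.completeSpace_coe
  haveI : FiniteDimensional ℂ ↥U := aux_ker_findim hK1
  have hker_star : ∀ x : H, N x = 0 ↔ (star N) x = 0 := by
    intro x
    have h := aux_norm_star hnormal x
    constructor <;> intro hx
    · rw [hx, norm_zero] at h; exact norm_eq_zero.mp h.symm
    · rw [hx, norm_zero] at h; exact norm_eq_zero.mp h
  -- ranges of N are orthogonal to U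
  have hNorthU : ∀ (x : H) (u : H), u ∈ U → ⟪N x, u⟫ = 0 := by
    intro x u hu
    rw [← ContinuousLinearMap.adjoint_inner_right N x u,
      ← ContinuousLinearMap.star_eq_adjoint]
    rw [(hker_star u).mp hu]
    exact inner_zero_right x
  set P : H →L[ℂ] H := U.subtypeL ∘L U.orthogonalProjectionOnto with hPdef
  have hPcompact : IsCompactOperator ⇑P := aux_proj_compact U
  have hPmem : ∀ x, P x ∈ U := fun x => (U.orthogonalProjectionOnto x).2
  have hPfix : ∀ x ∈ U, P x = x := by
    intro x hx
    show (↑(U.orthogonalProjectionOnto x) : H) = x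
    rw [show x = ((⟨x, hx⟩ : U) : H) from rfl, Submodule.orthogonalProjectionOnto_mem_subspace_eq_self]
  have hPsub : ∀ x : H, x - P x ∈ Uᗮ := fun x => Submodule.sub_starProjection_mem_orthogonal x
  -- N is bounded below on Uᗮ
  have hSsub : (star N * N) - 1 = (star N * N - 1) := rfl
  have hVinj : ∀ x ∈ Uᗮ, (star N * N) x = 0 → x = 0 := by
    intro x hx hNx
    have h0 : ⟪N x, N x⟫ = 0 := by
      rw [← ContinuousLinearMap.adjoint_inner_left N x (N x),
        ← ContinuousLinearMap.star_eq_adjoint, ← ContinuousLinearMap.mul_apply, hNx]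
      exact inner_zero_left x
    have hNx0 : N x = 0 := inner_self_eq_zero.mp h0
    have hxU : x ∈ U := hNx0
    have := (Submodule.mem_orthogonal _ _).mp hx x hxU
    exact inner_self_eq_zero.mp this
  obtain ⟨c, hc, hcb⟩ := aux_bounded_below (S := star N * N) (by rw [hSsub]; exact hK1)
    (V := Uᗮ) U.isClosed_orthogonal hVinj
  set c2 : ℝ := c / (‖star N‖ + 1) with hc2def
  have hc2 : 0 < c2 := div_pos hc (by positivity)
  have hNb : ∀ x ∈ Uᗮ, c2 * ‖x‖ ≤ ‖N x‖ := by
    intro x hx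
    have h1 := hcb x hx
    have h2 : ‖(star N * N) x‖ ≤ (‖star N‖ + 1) * ‖N x‖ := by
      rw [ContinuousLinearMap.mul_apply]
      calc ‖(star N) (N x)‖ ≤ ‖star N‖ * ‖N x‖ := (star N).le_opNorm (N x)
        _ ≤ (‖star N‖ + 1) * ‖N x‖ := by nlinarith [norm_nonneg (N x)]
    rw [hc2def, div_mul_eq_mul_div, div_le_iff₀ (by positivity)]
    calc c * ‖x‖ ≤ ‖(star N * N) x‖ := h1
      _ ≤ (‖star N‖ + 1) * ‖N x‖ := h2
      _ = ‖N x‖ * (‖star N‖ + 1) := by ring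
  -- the range of N is closed and equals Uᗮ
  set g : ↥Uᗮ →L[ℂ] H := N ∘L (Submodule.subtypeL Uᗮ) with hgdef
  have hganti : AntilipschitzWith (⟨c2, hc2.le⟩⁻¹) ⇑g := by
    apply ContinuousLinearMap.antilipschitz_of_bound
    intro v
    have := hNb (v : H) v.2
    change ‖v‖ ≤ c2⁻¹ * ‖g v‖
    rw [le_inv_mul_iff₀ hc2]
    calc c2 * ‖v‖ = c2 * ‖(v : H)‖ := rfl
      _ ≤ ‖N (v : H)‖ := this
      _ = ‖g v‖ := rfl
  have hgrange : Set.range ⇑g = Set.range ⇑N := by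
    apply Set.Subset.antisymm
    · rintro _ ⟨v, rfl⟩; exact ⟨(v : H), rfl⟩
    · rintro _ ⟨x, rfl⟩
      refine ⟨⟨x - P x, hPsub x⟩, ?_⟩
      show N (x - P x) = N x
      rw [map_sub]
      have : N (P x) = 0 := hPmem x
      rw [this, sub_zero]
  have hRclosed : IsClosed ((LinearMap.range (N : H →ₗ[ℂ] H) : Submodule ℂ H) : Set H) := by
    rw [LinearMap.coe_range, ContinuousLinearMap.coe_coe, ← hgrange]
    exact hganti.isClosed_range g.uniformContinuous
  haveI : CompleteSpace ↥(LinearMap.range (N : H →ₗ[ℂ] H) : Submodule ℂ H) := hRclosed.completeSpace_coe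
  have hRorth : (LinearMap.range (N : H →ₗ[ℂ] H) : Submodule ℂ H)ᗮ = U := by
    ext y
    rw [Submodule.mem_orthogonal]
    constructor
    · intro hy
      have h1 : ∀ x : H, ⟪x, (star N) y⟫ = 0 := by
        intro x
        rw [ContinuousLinearMap.star_eq_adjoint, ContinuousLinearMap.adjoint_inner_right]
        exact hy (N x) ⟨x, rfl⟩
      have h2 : (star N) y = 0 := by
        have := h1 ((star N) y)
        exact inner_self_eq_zero.mp this
      exact (hker_star y).mpr h2
    · rintro hyU _ ⟨x, rfl⟩
      exact hNorthU x y hyU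
  have hR : (LinearMap.range (N : H →ₗ[ℂ] H) : Submodule ℂ H) = Uᗮ := by
    rw [← Submodule.orthogonal_orthogonal (LinearMap.range (N : H →ₗ[ℂ] H) : Submodule ℂ H), hRorth]
  -- A := N + P is bijective
  set A : H →L[ℂ] H := N + P with hAdef
  have hAker : LinearMap.ker (A : H →ₗ[ℂ] H) = ⊥ := by
    rw [Submodule.eq_bot_iff]
    intro x hx
    have hx0 : N x + P x = 0 := hx
    have horth : ⟪N x, P x⟫ = 0 := hNorthU x _ (hPmem x)
    have hNPx : N x = -(P x) := by linear_combination (norm := abel) hx0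
    rw [hNPx, inner_neg_left, neg_eq_zero, inner_self_eq_zero] at horth
    rw [horth, neg_zero] at hNPx
    have hxU : x ∈ U := hNPx
    have := hPfix x hxU
    rw [horth] at this
    exact this.symm
  have hArange : LinearMap.range (A : H →ₗ[ℂ] H) = ⊤ := by
    rw [Submodule.eq_top_iff']
    intro y
    have hy1 : y - P y ∈ Uᗮ := hPsub y
    rw [← hR] at hy1
    obtain ⟨x₁, hx₁⟩ := hy1
    simp only [ContinuousLinearMap.coe_coe] at hx₁
    refine ⟨x₁ - P x₁ + P y, ?_⟩
    show N (x₁ - P x₁ + P y) + P (x₁ - P x₁ + P y) = y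
    have e1 : N (x₁ - P x₁ + P y) = N x₁ := by
      rw [map_add, map_sub]
      have h1 : N (P x₁) = 0 := hPmem x₁
      have h2 : N (P y) = 0 := hPmem y
      rw [h1, h2, sub_zero, add_zero]
    have e2 : P (x₁ - P x₁ + P y) = P y := by
      rw [map_add, map_sub, hPfix (P x₁) (hPmem x₁), hPfix (P y) (hPmem y)]
      abel
    rw [e1, e2, hx₁]
    abel
  set E := ContinuousLinearEquiv.ofBijective A hAker hArange with hEdef
  have hE : ∀ x, E x = A x := fun x =>
    congrFun (ContinuousLinearEquiv.coeFn_ofBijective A hAker hArange) x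
  -- D is compact and T = A ∘ (1 - D)
  set C' : H →L[ℂ] H := (N - T) + P with hC'def
  have hC'compact : IsCompactOperator ⇑C' := by
    have : ⇑C' = ⇑(N - T) + ⇑P := by ext z; simp [hC'def]
    rw [this]
    exact hC.add hPcompact
  set D : H →L[ℂ] H := (E.symm : H →L[ℂ] H) ∘L C' with hDdef
  have hDcompact : IsCompactOperator ⇑D := by
    have : ⇑D = (⇑(E.symm : H →L[ℂ] H)) ∘ ⇑C' := rfl
    rw [this]
    exact hC'compact.continuous_comp (E.symm : H →L[ℂ] H).continuous
  have hTD : ∀ x, T x = A ((1 - D) x) := by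
    intro x
    have h1 : (1 - D) x = x - E.symm (C' x) := rfl
    rw [h1, map_sub]
    have h2 : A (E.symm (C' x)) = C' x := by
      rw [← hE]; exact E.apply_symm_apply (C' x)
    rw [h2]
    show T x = (N + P) x - ((N - T) + P) x
    simp
  have hTx : ∀ x, (star T) (T x) = x := by
    intro x
    rw [← ContinuousLinearMap.mul_apply, hT]; rfl
  have hTinj : Function.Injective ⇑T := by
    intro x y h
    have := congrArg (⇑(star T)) h
    rwa [hTx, hTx] at this
  have h1Dinj : Function.Injective ⇑(1 - D) := by
    intro x y h
    apply hTinj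
    rw [hTD x, hTD y, h]
  have h1Dsurj := fredholm_alternative hDcompact h1Dinj
  have hTsurj : Function.Surjective ⇑T := by
    intro y
    obtain ⟨x, hx⟩ := h1Dsurj (E.symm y)
    refine ⟨x, ?_⟩
    rw [hTD x, hx, ← hE, E.apply_symm_apply]
  ext y
  obtain ⟨x, rfl⟩ := hTsurj y
  show T ((star T) (T x)) = T x
  rw [hTx]

end AuxiliaryLemmas

/-- Proof of Proposition 4.7: let `K` be a Peano continuum containing a copy of the circle
`S¹` (via a topological embedding `e`). Let `H` be a Hilbert space, `π : B(H) → M` a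
surjective unital *-homomorphism with kernel the compact operators, `T ∈ B(H)` a proper
isometry with compact defect (e.g. the unilateral shift), and `ρ : C(S¹) → M` the unital
*-homomorphism sending the identity function `z` to `π(T)`. Then the composition of the
restriction map `j : C(K) → C(S¹)`, `j f = f ∘ e`, with `ρ` does not lift to a unital
*-homomorphism `C(K) → B(H)`; hence `C(K)` is not W*-C*-projective. -/
theorem peano_continuum_with_circle_not_liftable
    {K : Type*} [MetricSpace K] [CompactSpace K] [ConnectedSpace K]
    [LocallyConnectedSpace K] [Nonempty K]
    (e : Circle → K) (he : Topology.IsEmbedding e)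
    {H : Type*} [NormedAddCommGroup H] [InnerProductSpace ℂ H] [CompleteSpace H]
    {M : Type*} [NormedRing M] [StarRing M] [CStarRing M] [CompleteSpace M]
    [NormedAlgebra ℂ M] [StarModule ℂ M]
    (π : (H →L[ℂ] H) →⋆ₐ[ℂ] M) (hπ : Function.Surjective π)
    (hker : ∀ S : H →L[ℂ] H, π S = 0 ↔ IsCompactOperator ⇑S)
    (T : H →L[ℂ] H) (hT_isom : star T * T = 1) (hT_proper : T * star T ≠ 1)
    (hT_defect : IsCompactOperator ⇑(1 - T * star T))
    (ρ : C(Circle, ℂ) →⋆ₐ[ℂ] M)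
    (hρ : ρ ⟨fun w => (w : ℂ), continuous_subtype_val⟩ = π T) :
    ¬ ∃ γ : C(K, ℂ) →⋆ₐ[ℂ] (H →L[ℂ] H),
        ∀ f : C(K, ℂ), π (γ f) = ρ (f.comp ⟨e, he.continuous⟩) := by
  rintro ⟨γ, hγ⟩
  -- `e` is a closed embedding since `Circle` is compact and `K` is Hausdorff
  have hce : Topology.IsClosedEmbedding e :=
    ⟨he, (isCompact_range he.continuous).isClosed⟩
  -- Tietze extension of the identity function on the circle
  set z : C(Circle, ℂ) := ⟨fun w => (w : ℂ), continuous_subtype_val⟩ with hzdef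
  obtain ⟨f, hf⟩ := z.exists_extension hce
  set N : H →L[ℂ] H := γ f with hNdef
  have hπN : π N = π T := by
    rw [hNdef, hγ f, hf, hρ]
  -- N is normal
  have hnormal : star N * N = N * star N := by
    rw [hNdef, ← map_star, ← map_mul, ← map_mul, mul_comm]
  -- N - T is compact
  have hC : IsCompactOperator ⇑(N - T) := by
    rw [← hker]
    rw [map_sub, hπN, sub_self]
  -- star N * N - 1 is compact
  have hK1 : IsCompactOperator ⇑(star N * N - 1) := by
    rw [← hker]
    rw [map_sub, map_mul, map_star, hπN, map_one, ← map_star, ← map_mul, hT_isom,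
      map_one, sub_self]
  exact hT_proper (core_lemma hnormal hK1 hC hT_isom)
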